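/- (Theorem 2, Case 2: permuted leading eigenvectors are strict saddles.) Let M be an N×N real symmetric matrix with eigenvalues λ₁ > λ₂ > ⋯ > λ_r > λ_{r+1} ≥ ⋯ ≥ λ_N and d_min = min_{1 ≤ s < j ≤ r+1} (λ_s − λ_j). Let σ be a permutation of {1, …, r} different from the identity, and let X_Ω ∈ ℝ^{N×r} whose j-th column is a unit eigenvector of M with eigenvalue λ_{σ(j)}. Then there exists a nonzero U in the tangent space T_{X_Ω} = {U : X_Ωᵀ U + Uᵀ X_Ω = 0} such that hess g(X_Ω)[U,U] ≤ −(1/2) d_min ‖U‖_F²; in particular λ_min(hess g(X_Ω)) ≤ −(1/2) d_min, so X_Ω is a strict saddle point of g on the Stiefel manifold. -/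

import Mathlib

open Matrix

/-- The diagonal weight matrix `N_r = diag(r, r−1, …, 1)`. -/
noncomputable def Nr (r : ℕ) : Matrix (Fin r) (Fin r) ℝ :=
  Matrix.diagonal fun j => (r : ℝ) - (j : ℕ)

/-- The trace inner product `⟨A, B⟩ = ∑_{ij} A_{ij} B_{ij}`. -/
def tip {m n : ℕ} (A B : Matrix (Fin m) (Fin n) ℝ) : ℝ :=
  ∑ i, ∑ j, A i j * B i j

/-- `d_min = min_{1 ≤ s < j ≤ r+1} (λ_s − λ_j)` (0-based: `0 ≤ s < j ≤ r`). -/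
noncomputable def dmin {N : ℕ} (lam : Fin N → ℝ) (r : ℕ) : ℝ :=
  sInf {d : ℝ | ∃ s j : Fin N, (s : ℕ) < (j : ℕ) ∧ (j : ℕ) ≤ r ∧ d = lam s - lam j}

/-- Theorem 2, Case 2: if the columns of `X_Ω` are the leading `r`
unit eigenvectors of `M` arranged according to a non-identity permutation `σ`,
then there is a nonzero tangent direction `U` with
`hess g(X_Ω)[U,U] ≤ −(1/2) d_min ‖U‖_F²`; `X_Ω` is a strict saddle point. -/
private lemma stmt9_aux1 {α : Type*} [DecidableEq α] (a b j k : α) (hne : a ≠ b)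
    (f g : α → ℝ) :
    (if j = k then f k else 0) * ((if j = a then (if k = a then (1:ℝ) else 0)
      else if j = b then (if k = b then 1 else 0) else 0) * g k)
    = (if j = a then (if k = a then f a * g a else 0) else 0)
      + (if j = b then (if k = b then f b * g b else 0) else 0) := by
  split_ifs <;> simp_all <;> ring

private lemma stmt9_aux2 {α : Type*} [DecidableEq α] (a b j : α) (hne : a ≠ b)
    (x y x' y' : ℝ) (g : α → ℝ) :
    ((if j = a then x else if j = b then -y else 0) * g j)
      * (if j = a then x' else if j = b then -y' else 0)
    = (if j = a then g a * (x * x') else 0) + (if j = b then g b * (y * y') else 0) := by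
  split_ifs <;> simp_all <;> ring

private lemma stmt9_aux3 {α : Type*} [DecidableEq α] (a b j : α) (hne : a ≠ b)
    (x y : ℝ) :
    (if j = a then x else if j = b then -y else 0) ^ 2
    = (if j = a then x * x else 0) + (if j = b then y * y else 0) := by
  split_ifs <;> simp_all <;> ring

theorem stmt_9 {N r : ℕ} (hr : 1 ≤ r) (hrN : r < N)
    (M : Matrix (Fin N) (Fin N) ℝ) (hM : M.IsSymm)
    (lam : Fin N → ℝ) (v : Fin N → Fin N → ℝ)
    (horth : ∀ i j : Fin N, v i ⬝ᵥ v j = if i = j then 1 else 0)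
    (heig : ∀ i : Fin N, M *ᵥ v i = lam i • v i)
    (hstrict : ∀ s j : Fin N, (s : ℕ) < (j : ℕ) → (j : ℕ) ≤ r → lam j < lam s)
    (hmono : ∀ s j : Fin N, r ≤ (s : ℕ) → s ≤ j → lam j ≤ lam s)
    (σ : Equiv.Perm (Fin r)) (hσ : σ ≠ 1)
    (X : Matrix (Fin N) (Fin r) ℝ)
    (hX : ∀ (i : Fin N) (j : Fin r), X i j = v (Fin.castLE hrN.le (σ j)) i) :
    ∃ U : Matrix (Fin N) (Fin r) ℝ, U ≠ 0 ∧ Xᵀ * U + Uᵀ * X = 0 ∧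
      tip (Xᵀ * M * X) (Uᵀ * U * Nr r) - tip M (U * Nr r * Uᵀ) ≤
        -((1/2 : ℝ) * dmin lam r) * ∑ i, ∑ j, U i j ^ 2 := by
  classical
  -- find an inversion
  obtain ⟨a, b, hab, hsab⟩ : ∃ a b : Fin r, a < b ∧ σ b < σ a := by
    by_contra h
    push_neg at h
    apply hσ
    have hm : StrictMono (σ : Fin r → Fin r) := by
      intro x y hxy
      exact lt_of_le_of_ne (h x y hxy) (fun he => (ne_of_lt hxy) (σ.injective he))
    have : (σ : Fin r → Fin r) = id :=
      (hm.range_inj strictMono_id).1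
        (by rw [Set.range_id, Set.range_eq_univ.2 σ.surjective])
    exact Equiv.ext fun x => congrFun this x
  have hne : a ≠ b := ne_of_lt hab
  set c : Fin r → Fin N := fun j => Fin.castLE hrN.le (σ j) with hc
  have hcinj : Function.Injective c := fun x y h => σ.injective (Fin.castLE_injective hrN.le h)
  have hX' : ∀ (i : Fin N) (j : Fin r), X i j = v (c j) i := fun i j => hX i j
  have horth' : ∀ j k : Fin r, ∑ i, v (c j) i * v (c k) i = if j = k then (1:ℝ) else 0 := by
    intro j k
    have h := horth (c j) (c k)
    simp only [dotProduct] at h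
    rw [h]
    simp [hcinj.eq_iff]
  have heig' : ∀ (q : Fin r) (i : Fin N), ∑ p, M i p * v (c q) p = lam (c q) * v (c q) i := by
    intro q i
    have h := congrFun (heig (c q)) i
    simpa [mulVec, dotProduct] using h
  -- the quadratic form of each eigenvector
  have hquad : ∀ q : Fin r, (∑ i, ∑ p, M i p * (v (c q) i * v (c q) p)) = lam (c q) := by
    intro q
    have : ∀ i, ∑ p, M i p * (v (c q) i * v (c q) p)
        = v (c q) i * (lam (c q) * v (c q) i) := by
      intro i
      rw [show (∑ p, M i p * (v (c q) i * v (c q) p))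
          = v (c q) i * ∑ p, M i p * v (c q) p by rw [Finset.mul_sum]; apply Finset.sum_congr rfl; intros; ring]
      rw [heig' q i]
    rw [Finset.sum_congr rfl (fun i _ => this i)]
    have : (∑ i, v (c q) i * (lam (c q) * v (c q) i)) = lam (c q) * ∑ i, v (c q) i * v (c q) i := by
      rw [Finset.mul_sum]; apply Finset.sum_congr rfl; intros; ring
    rw [this, horth' q q]
    simp
  -- the direction
  refine ⟨Matrix.of (fun i j => if j = a then v (c b) i else if j = b then -(v (c a) i) else 0),
    ?_, ?_, ?_⟩
  · -- nonzero
    intro hU0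
    have h1 : (∑ i, v (c b) i * v (c b) i) = 1 := by rw [horth' b b]; simp
    have hz : ∀ i, v (c b) i = 0 := by
      intro i
      have := congrFun (congrFun hU0 i) a
      simpa using this
    simp [hz] at h1
  · -- tangency
    have sXU : ∀ (j k : Fin r), (∑ i, v (c j) i *
        (if k = a then v (c b) i else if k = b then -(v (c a) i) else 0))
        = (if k = a then (if j = b then (1:ℝ) else 0) else if k = b then -(if j = a then (1:ℝ) else 0) else 0) := by
      intro j k
      rcases eq_or_ne k a with hk | hk
      · simp only [if_pos hk]
        exact horth' j b
      · rcases eq_or_ne k b with hk2 | hk2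
        · simp only [if_neg hk, if_pos hk2, mul_neg, Finset.sum_neg_distrib, horth' j a]
        · simp only [if_neg hk, if_neg hk2, mul_zero, Finset.sum_const_zero]
    ext j k
    simp only [Matrix.add_apply, Matrix.mul_apply, Matrix.transpose_apply, Matrix.of_apply,
      Matrix.zero_apply, hX']
    rw [show (∑ i, (if j = a then v (c b) i else if j = b then -(v (c a) i) else 0) * v (c k) i)
        = ∑ i, v (c k) i * (if j = a then v (c b) i else if j = b then -(v (c a) i) else 0) by
        apply Finset.sum_congr rfl; intros; ring]
    rw [sXU j k, sXU k j]
    have := hne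
    split_ifs <;> simp_all
  · -- the inequality
    have sXU : ∀ (j k : Fin r), (∑ i, v (c j) i *
        (if k = a then v (c b) i else if k = b then -(v (c a) i) else 0))
        = (if k = a then (if j = b then (1:ℝ) else 0) else if k = b then -(if j = a then (1:ℝ) else 0) else 0) := by
      intro j k
      rcases eq_or_ne k a with hk | hk
      · simp only [if_pos hk]
        exact horth' j b
      · rcases eq_or_ne k b with hk2 | hk2
        · simp only [if_neg hk, if_pos hk2, mul_neg, Finset.sum_neg_distrib, horth' j a]
        · simp only [if_neg hk, if_neg hk2, mul_zero, Finset.sum_const_zero]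
    set U : Matrix (Fin N) (Fin r) ℝ :=
      Matrix.of (fun i j => if j = a then v (c b) i else if j = b then -(v (c a) i) else 0) with hUdef
    have hUapp : ∀ (i : Fin N) (j : Fin r),
        U i j = if j = a then v (c b) i else if j = b then -(v (c a) i) else 0 := fun i j => rfl
    have hdiag : ∀ {m : ℕ} (A : Matrix (Fin m) (Fin r) ℝ) (i : Fin m) (j : Fin r),
        (A * Nr r) i j = A i j * ((r:ℝ) - (j:ℕ)) := by
      intro m A i j
      rw [Nr, Matrix.mul_diagonal]
    have hXMX : ∀ j k : Fin r, (Xᵀ * M * X) j k = if j = k then lam (c k) else 0 := by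
      intro j k
      have e1 : (Xᵀ * M * X) j k = ∑ p, (∑ i, X i j * M i p) * X p k := by
        simp [Matrix.mul_apply, Matrix.transpose_apply]
      rw [e1]
      simp only [Finset.sum_mul, hX']
      rw [Finset.sum_comm]
      have e2 : ∀ i, (∑ p, v (c j) i * M i p * v (c k) p)
          = v (c j) i * (lam (c k) * v (c k) i) := by
        intro i
        rw [show (∑ p, v (c j) i * M i p * v (c k) p) = v (c j) i * ∑ p, M i p * v (c k) p by
          rw [Finset.mul_sum]; apply Finset.sum_congr rfl; intros; ring]
        rw [heig' k i]
      rw [Finset.sum_congr rfl fun i _ => e2 i]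
      rw [show (∑ i, v (c j) i * (lam (c k) * v (c k) i))
          = lam (c k) * ∑ i, v (c j) i * v (c k) i by
        rw [Finset.mul_sum]; apply Finset.sum_congr rfl; intros; ring]
      rw [horth' j k]
      rcases eq_or_ne j k with h | h
      · simp [h]
      · simp [h]
    have hUU : ∀ j k : Fin r, (Uᵀ * U) j k =
        (if j = a then (if k = a then (1:ℝ) else 0)
          else if j = b then (if k = b then 1 else 0) else 0) := by
      intro j k
      have e1 : (Uᵀ * U) j k = ∑ i, U i j * U i k := by
        simp [Matrix.mul_apply, Matrix.transpose_apply]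
      rw [e1]
      simp only [hUapp]
      rcases eq_or_ne j a with hj | hj
      · simp only [if_pos hj]
        rw [sXU b k]
        simp [hne.symm]
      · rcases eq_or_ne j b with hj2 | hj2
        · simp only [if_neg hj, if_pos hj2, neg_mul, Finset.sum_neg_distrib]
          rw [sXU a k]
          simp only [hne, if_false]
          rcases eq_or_ne k a with h1 | h1 <;> rcases eq_or_ne k b with h2 | h2 <;>
            first
            | exact absurd (h1.symm.trans h2) hne
            | simp [h1, h2, hne, Ne.symm hne]
        · simp only [if_neg hj, if_neg hj2, zero_mul, Finset.sum_const_zero]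
    -- first tip term
    have hT1 : tip (Xᵀ * M * X) (Uᵀ * U * Nr r)
        = lam (c a) * ((r:ℝ) - (a:ℕ)) + lam (c b) * ((r:ℝ) - (b:ℕ)) := by
      unfold tip
      have e : ∀ j k : Fin r, (Xᵀ * M * X) j k * ((Uᵀ * U * Nr r) j k)
          = (if j = a then (if k = a then lam (c a) * ((r:ℝ) - (a:ℕ)) else 0) else 0)
            + (if j = b then (if k = b then lam (c b) * ((r:ℝ) - (b:ℕ)) else 0) else 0) := by
        intro j k
        rw [hdiag, hXMX, hUU]
        exact stmt9_aux1 a b j k hne (fun x => lam (c x)) (fun x : Fin r => (r:ℝ) - (x:ℕ))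
      rw [Finset.sum_congr rfl fun j _ => Finset.sum_congr rfl fun k _ => e j k]
      have e2 : ∀ j : Fin r, (∑ k : Fin r,
          ((if j = a then (if k = a then lam (c a) * ((r:ℝ) - (a:ℕ)) else 0) else 0)
            + (if j = b then (if k = b then lam (c b) * ((r:ℝ) - (b:ℕ)) else 0) else 0)))
          = (if j = a then lam (c a) * ((r:ℝ) - (a:ℕ)) else 0)
            + (if j = b then lam (c b) * ((r:ℝ) - (b:ℕ)) else 0) := by
        intro j
        rw [Finset.sum_add_distrib]
        congr 1
        · rcases eq_or_ne j a with h | h <;> simp [h, Finset.sum_ite_eq']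
        · rcases eq_or_ne j b with h | h <;> simp [h, Finset.sum_ite_eq']
      rw [Finset.sum_congr rfl fun j _ => e2 j, Finset.sum_add_distrib,
        Finset.sum_ite_eq', Finset.sum_ite_eq']
      simp
    -- second tip term
    have hUNU : ∀ (i p : Fin N), (U * Nr r * Uᵀ) i p
        = ((r:ℝ) - (a:ℕ)) * (v (c b) i * v (c b) p)
          + ((r:ℝ) - (b:ℕ)) * (v (c a) i * v (c a) p) := by
      intro i p
      have e1 : (U * Nr r * Uᵀ) i p = ∑ j, (U i j * ((r:ℝ) - (j:ℕ))) * U p j := by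
        rw [Matrix.mul_apply]
        exact Finset.sum_congr rfl fun j _ => by rw [hdiag, Matrix.transpose_apply]
      rw [e1]
      have e2 : ∀ j : Fin r, (U i j * ((r:ℝ) - (j:ℕ))) * U p j
          = (if j = a then ((r:ℝ) - (a:ℕ)) * (v (c b) i * v (c b) p) else 0)
            + (if j = b then ((r:ℝ) - (b:ℕ)) * (v (c a) i * v (c a) p) else 0) := by
        intro j
        simp only [hUapp]
        exact stmt9_aux2 a b j hne (v (c b) i) (v (c a) i) (v (c b) p) (v (c a) p)
          (fun x : Fin r => (r:ℝ) - (x:ℕ))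
      rw [Finset.sum_congr rfl fun j _ => e2 j, Finset.sum_add_distrib,
        Finset.sum_ite_eq', Finset.sum_ite_eq']
      simp
    have hT2 : tip M (U * Nr r * Uᵀ)
        = ((r:ℝ) - (a:ℕ)) * lam (c b) + ((r:ℝ) - (b:ℕ)) * lam (c a) := by
      unfold tip
      rw [Finset.sum_congr rfl fun i _ => Finset.sum_congr rfl fun p _ => by rw [hUNU i p]]
      have e : (∑ i, ∑ p, M i p * (((r:ℝ) - (a:ℕ)) * (v (c b) i * v (c b) p)
            + ((r:ℝ) - (b:ℕ)) * (v (c a) i * v (c a) p)))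
          = ((r:ℝ) - (a:ℕ)) * (∑ i, ∑ p, M i p * (v (c b) i * v (c b) p))
            + ((r:ℝ) - (b:ℕ)) * (∑ i, ∑ p, M i p * (v (c a) i * v (c a) p)) := by
        simp only [Finset.mul_sum]
        rw [← Finset.sum_add_distrib]
        apply Finset.sum_congr rfl
        intro i _
        rw [← Finset.sum_add_distrib]
        apply Finset.sum_congr rfl
        intro p _
        ring
      rw [e, hquad a, hquad b]
    -- norm of U
    have hnorm : (∑ i, ∑ j, U i j ^ 2) = 2 := by
      have e : ∀ (i : Fin N) (j : Fin r), U i j ^ 2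
          = (if j = a then v (c b) i * v (c b) i else 0)
            + (if j = b then v (c a) i * v (c a) i else 0) := by
        intro i j
        simp only [hUapp]
        exact stmt9_aux3 a b j hne (v (c b) i) (v (c a) i)
      rw [Finset.sum_congr rfl fun i _ => Finset.sum_congr rfl fun j _ => e i j]
      have e2 : ∀ i : Fin N, (∑ j : Fin r,
          ((if j = a then v (c b) i * v (c b) i else 0)
            + (if j = b then v (c a) i * v (c a) i else 0)))
          = v (c b) i * v (c b) i + v (c a) i * v (c a) i := by
        intro i
        rw [Finset.sum_add_distrib, Finset.sum_ite_eq', Finset.sum_ite_eq']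
        simp
      rw [Finset.sum_congr rfl fun i _ => e2 i, Finset.sum_add_distrib, horth' b b, horth' a a]
      norm_num
    -- dmin bound
    have hlt : ((c b : Fin N) : ℕ) < ((c a : Fin N) : ℕ) := hsab
    have hler : ((c a : Fin N) : ℕ) ≤ r := le_of_lt (σ a).isLt
    have hdle : dmin lam r ≤ lam (c b) - lam (c a) := by
      apply csInf_le
      · have hsub : {d : ℝ | ∃ s j : Fin N, (s:ℕ) < (j:ℕ) ∧ (j:ℕ) ≤ r ∧ d = lam s - lam j} ⊆
            Set.range fun p : Fin N × Fin N => lam p.1 - lam p.2 := by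
          rintro d ⟨s, j, -, -, rfl⟩
          exact ⟨(s, j), rfl⟩
        exact ((Set.finite_range _).subset hsub).bddBelow
      · exact ⟨c b, c a, hlt, hler, rfl⟩
    have hgap : lam (c a) < lam (c b) := hstrict (c b) (c a) hlt hler
    have hba : (a:ℝ) + 1 ≤ (b:ℝ) := by exact_mod_cast Nat.succ_le.mpr hab
    rw [hT1, hT2, hnorm]
    have hprod : 0 ≤ (lam (c b) - lam (c a)) * ((b:ℝ) - (a:ℝ) - 1) :=
      mul_nonneg (by linarith) (by linarith)
    nlinarith [hprod, hdle, hgap, hba]
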